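/- Define g(M,β) = min over partitions P of M (of any size) of ∑_{S∈P} (β − H(X_{Sᶜ}|X_S)). Then g(M,·) is a piecewise-linear concave function of β with at most m linear segments, its slope as a function of β is non-increasing, and for β ≥ H(X_M) its slope equals 1 (i.e., g(M,β) = β for all β ≥ H(X_M)). -/

import Mathlib

open Finset

/-- `P` is a partition of the finite set `S`. -/
def IsPartitionOf {ι : Type*} [DecidableEq ι] (P : Finset (Finset ι)) (S : Finset ι) : Prop :=
  (∀ V ∈ P, V.Nonempty) ∧ (∀ V ∈ P, ∀ W ∈ P, V ≠ W → Disjoint V W) ∧ P.biUnion id = S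

lemma H_subadd_aux {m : ℕ} (H : Finset (Fin m) → ℝ) (hH0 : H ∅ = 0)
    (hHmono : ∀ S T : Finset (Fin m), S ⊆ T → H S ≤ H T)
    (hHsub : ∀ S T : Finset (Fin m), H (S ∪ T) + H (S ∩ T) ≤ H S + H T) :
    ∀ P : Finset (Finset (Fin m)), H (P.biUnion id) ≤ ∑ S ∈ P, H S := by
  classical
  intro P
  induction P using Finset.induction with
  | empty => simp [hH0]
  | insert a P h ih =>
    rw [Finset.biUnion_insert, Finset.sum_insert h]
    have h1 := hHsub a (P.biUnion id)
    have h2 : 0 ≤ H (a ∩ P.biUnion id) := hH0 ▸ hHmono ∅ _ (Finset.empty_subset _)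
    simp only [id_eq] at *
    linarith

set_option maxHeartbeats 1000000

/-- `g(M,β) = min over partitions P of M of ∑_{S∈P} (β − H(X_{Sᶜ}|X_S))`
is a piecewise-linear concave function of `β`: it is a minimum of at most `m` affine
functions with slopes `k ∈ {1,…,m}` (the partition sizes), it is concave, and for
`β ≥ H(X_M)` it equals `β` (slope 1 on the last segment). -/
theorem dilworth_value_piecewise_linear_concave {m : ℕ} (hm : 1 ≤ m)
    (H : Finset (Fin m) → ℝ) (hH0 : H ∅ = 0)
    (hHmono : ∀ S T : Finset (Fin m), S ⊆ T → H S ≤ H T)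
    (hHsub : ∀ S T : Finset (Fin m), H (S ∪ T) + H (S ∩ T) ≤ H S + H T)
    (g : ℝ → ℝ)
    (hg : ∀ β : ℝ, IsLeast {x : ℝ | ∃ P : Finset (Finset (Fin m)),
        IsPartitionOf P Finset.univ ∧
        x = ∑ S ∈ P, (β - (H Finset.univ - H S))} (g β)) :
    (∃ K : Finset ℕ, K.Nonempty ∧ K ⊆ Finset.Icc 1 m ∧ ∃ c : ℕ → ℝ,
        ∀ β : ℝ, IsLeast {x : ℝ | ∃ k ∈ K, x = (k : ℝ) * β + c k} (g β)) ∧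
    ConcaveOn ℝ Set.univ g ∧
    (∀ β : ℝ, H Finset.univ ≤ β → g β = β) := by
  classical
  have hFinNe : (Finset.univ : Finset (Fin m)).Nonempty := ⟨⟨0, hm⟩, Finset.mem_univ _⟩
  -- the singleton partition
  have hsing : IsPartitionOf ({Finset.univ} : Finset (Finset (Fin m))) Finset.univ := by
    refine ⟨?_, ?_, ?_⟩ <;> simp [hFinNe]
  -- rewrite of the value of a partition as an affine function of β
  have hval : ∀ (β : ℝ) (P : Finset (Finset (Fin m))),
      ∑ S ∈ P, (β - (H Finset.univ - H S))
        = (P.card : ℝ) * β + (∑ S ∈ P, H S - (P.card : ℝ) * H Finset.univ) := by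
    intro β P
    rw [Finset.sum_sub_distrib, Finset.sum_sub_distrib, Finset.sum_const, Finset.sum_const,
      nsmul_eq_mul, nsmul_eq_mul]
    ring
  have hcard_pos : ∀ P : Finset (Finset (Fin m)), IsPartitionOf P Finset.univ → 1 ≤ P.card := by
    intro P hP
    rcases Finset.eq_empty_or_nonempty P with h | h
    · exfalso
      have := hP.2.2
      rw [h] at this
      simp at this
      exact hFinNe.ne_empty this.symm
    · exact Finset.card_pos.mpr h
  have hcard_le : ∀ P : Finset (Finset (Fin m)), IsPartitionOf P Finset.univ → P.card ≤ m := by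
    intro P hP
    have hdis : ∀ V ∈ P, ∀ W ∈ P, V ≠ W → Disjoint (id V) (id W) := hP.2.1
    have hc : ∑ S ∈ P, S.card = m := by
      have := Finset.card_biUnion hdis
      rw [hP.2.2] at this
      simpa using this.symm
    calc P.card = ∑ _S ∈ P, 1 := by simp
      _ ≤ ∑ S ∈ P, S.card := Finset.sum_le_sum (fun S hS => Finset.card_pos.mpr (hP.1 S hS))
      _ = m := hc
  have hsum_ge : ∀ P : Finset (Finset (Fin m)), IsPartitionOf P Finset.univ →
      H Finset.univ ≤ ∑ S ∈ P, H S := by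
    intro P hP
    have := H_subadd_aux H hH0 hHmono hHsub P
    rwa [hP.2.2] at this
  refine ⟨?_, ?_, ?_⟩
  · -- piecewise linear representation
    -- for each k, the set of possible constants for partitions of size k
    set cset : ℕ → Set ℝ := fun k =>
      {x : ℝ | ∃ P : Finset (Finset (Fin m)), IsPartitionOf P Finset.univ ∧ P.card = k ∧
        x = ∑ S ∈ P, H S - (k : ℝ) * H Finset.univ} with hcset
    have hfin : ∀ k, (cset k).Finite := by
      intro k
      apply Set.Finite.subset (Set.finite_range
        (fun P : Finset (Finset (Fin m)) => ∑ S ∈ P, H S - (k : ℝ) * H Finset.univ))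
      rintro x ⟨P, -, -, rfl⟩
      exact ⟨P, rfl⟩
    have hcleast : ∀ k, (cset k).Nonempty → IsLeast (cset k) (sInf (cset k)) := by
      intro k hne
      exact ⟨hne.csInf_mem (hfin k), fun x hx => csInf_le ((hfin k).bddBelow) hx⟩
    refine ⟨(Finset.Icc 1 m).filter
        (fun k => ∃ P : Finset (Finset (Fin m)), IsPartitionOf P Finset.univ ∧ P.card = k),
      ?_, Finset.filter_subset _ _, fun k => sInf (cset k), ?_⟩
    · refine ⟨1, Finset.mem_filter.mpr ⟨Finset.mem_Icc.mpr ⟨le_refl 1, hm⟩,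
        ⟨{Finset.univ}, hsing, by simp⟩⟩⟩
    · intro β
      obtain ⟨⟨P₀, hP₀, hx₀⟩, hlb⟩ := hg β
      constructor
      · -- membership: g β is attained with slope k₀ = P₀.card
        refine ⟨P₀.card, Finset.mem_filter.mpr ⟨Finset.mem_Icc.mpr
          ⟨hcard_pos P₀ hP₀, hcard_le P₀ hP₀⟩, ⟨P₀, hP₀, rfl⟩⟩, ?_⟩
        have hne : (cset P₀.card).Nonempty :=
          ⟨∑ S ∈ P₀, H S - (P₀.card : ℝ) * H Finset.univ, ⟨P₀, hP₀, rfl, rfl⟩⟩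
        obtain ⟨⟨P₁, hP₁, hcard₁, hc₁⟩, hclb⟩ := hcleast P₀.card hne
        have h1 : g β ≤ (P₀.card : ℝ) * β + sInf (cset P₀.card) := by
          have := hlb ⟨P₁, hP₁, rfl⟩
          rw [hval β P₁, hcard₁] at this
          rw [hc₁]
          exact this
        have h2 : sInf (cset P₀.card) ≤ ∑ S ∈ P₀, H S - (P₀.card : ℝ) * H Finset.univ :=
          hclb ⟨P₀, hP₀, rfl, rfl⟩
        show g β = (P₀.card : ℝ) * β + sInf (cset P₀.card)
        have h3 : g β = (P₀.card : ℝ) * β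
            + (∑ S ∈ P₀, H S - (P₀.card : ℝ) * H Finset.univ) := by
          rw [hx₀, hval β P₀]
        linarith
      · -- lower bound
        rintro x ⟨k, hk, rfl⟩
        obtain ⟨-, ⟨P, hP, hcard⟩⟩ := Finset.mem_filter.mp hk
        have hne : (cset k).Nonempty :=
          ⟨∑ S ∈ P, H S - (k : ℝ) * H Finset.univ, ⟨P, hP, hcard, rfl⟩⟩
        obtain ⟨⟨P₁, hP₁, hcard₁, hc₁⟩, -⟩ := hcleast k hne
        show g β ≤ (k : ℝ) * β + sInf (cset k)
        rw [hc₁]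
        have := hlb ⟨P₁, hP₁, rfl⟩
        rw [hval β P₁, hcard₁] at this
        exact this
  · -- concavity
    refine ⟨convex_univ, ?_⟩
    intro x _ y _ a b ha hb hab
    obtain ⟨⟨P, hP, hxy⟩, _⟩ := hg (a * x + b * y)
    obtain ⟨_, hlbx⟩ := hg x
    obtain ⟨_, hlby⟩ := hg y
    have h1 : g x ≤ (P.card : ℝ) * x + (∑ S ∈ P, H S - (P.card : ℝ) * H Finset.univ) := by
      have := hlbx ⟨P, hP, rfl⟩; rwa [hval] at this
    have h2 : g y ≤ (P.card : ℝ) * y + (∑ S ∈ P, H S - (P.card : ℝ) * H Finset.univ) := by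
      have := hlby ⟨P, hP, rfl⟩; rwa [hval] at this
    have h3 : g (a * x + b * y) = (P.card : ℝ) * (a * x + b * y)
        + (∑ S ∈ P, H S - (P.card : ℝ) * H Finset.univ) := by
      rw [hxy, hval]
    have h4 := add_le_add (mul_le_mul_of_nonneg_left h1 ha) (mul_le_mul_of_nonneg_left h2 hb)
    have h5 : a * ((P.card : ℝ) * x + (∑ S ∈ P, H S - (P.card : ℝ) * H Finset.univ))
        + b * ((P.card : ℝ) * y + (∑ S ∈ P, H S - (P.card : ℝ) * H Finset.univ))
        = (P.card : ℝ) * (a * x + b * y) + (∑ S ∈ P, H S - (P.card : ℝ) * H Finset.univ) := by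
      linear_combination (∑ S ∈ P, H S - (P.card : ℝ) * H Finset.univ) * hab
    simp only [smul_eq_mul]
    rw [h3, ← h5]
    exact h4
  · -- slope 1 for β ≥ H univ
    intro β hβ
    obtain ⟨⟨P₀, hP₀, hx₀⟩, hlb⟩ := hg β
    have hle : g β ≤ β := by
      have := hlb ⟨{Finset.univ}, hsing, rfl⟩
      simpa using this
    have hge : β ≤ g β := by
      rw [hx₀, hval]
      have hk1 : (1 : ℝ) ≤ (P₀.card : ℝ) := by exact_mod_cast hcard_pos P₀ hP₀
      have hs := hsum_ge P₀ hP₀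
      nlinarith
    linarith [hle, hge]
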